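/- There exists an absolute constant C₀ > 0 such that for every β ∈ [1,2) and every (c,b) ∈ C(β), writing x = ∑_{i=0}^∞ c_i, one has sup_{α ∈ A(c,b)} P(c,α) ≥ −log₂(5/4) + C₀·(x − 2/5)². -/

import Mathlib

/-- The binary entropy function, `h(p) = p log₂(1/p) + (1-p) log₂(1/(1-p))`,
with the convention `h(0) = h(1) = 0` (automatic since `1/0 = 0` and `logb 2 0 = 0`). -/
noncomputable def binH (p : ℝ) : ℝ :=
  p * Real.logb 2 (1 / p) + (1 - p) * Real.logb 2 (1 / (1 - p))

/-- `(c, b) ∈ C(β)`: `c : ℕ → [0,1]`, `∑ cᵢ/2ⁱ = 1/(β·2ᵇ)` and `∑ cᵢ ≤ 1`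
(the latter expressed via partial sums, which is equivalent for nonnegative terms). -/
def memC (β : ℝ) (c : ℕ → ℝ) (b : ℕ) : Prop :=
  (∀ i, c i ∈ Set.Icc (0 : ℝ) 1) ∧
  (∑' i : ℕ, c i / 2 ^ i) = 1 / (β * 2 ^ b) ∧
  ∀ n : ℕ, (∑ i ∈ Finset.range n, c i) ≤ 1

/-- `α ∈ A(c,b)`: `α : ℕ → [0,1]` with `∑ αᵢ cᵢ / 2ⁱ = 1/(β·2^{b+1})`. -/
def memA (β : ℝ) (b : ℕ) (c α : ℕ → ℝ) : Prop :=
  (∀ i, α i ∈ Set.Icc (0 : ℝ) 1) ∧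
  (∑' i : ℕ, α i * c i / 2 ^ i) = 1 / (β * 2 ^ (b + 1))

/-- `P(c,α) = ∑ h(αᵢ)·cᵢ − h(∑ αᵢ·cᵢ)`. -/
noncomputable def Pfun (c α : ℕ → ℝ) : ℝ :=
  (∑' i : ℕ, binH (α i) * c i) - binH (∑' i : ℕ, α i * c i)

/-- `sup_{α ∈ A(c,b)} P(c,α)`. -/
noncomputable def supP (β : ℝ) (b : ℕ) (c : ℕ → ℝ) : ℝ :=
  sSup {y | ∃ α, memA β b c α ∧ y = Pfun c α}

/-- `G(β) = inf_{(c,b) ∈ C(β)} sup_{α ∈ A(c,b)} P(c,α)`. -/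
noncomputable def Gfun (β : ℝ) : ℝ :=
  sInf {y | ∃ c b, memC β c b ∧ y = supP β b c}

/-! ### Auxiliary lemmas -/

lemma binH_eq (p : ℝ) : binH p = Real.binEntropy p / Real.log 2 := by
  unfold binH Real.binEntropy
  simp only [Real.logb, one_div]
  ring

lemma binH_nonneg {p : ℝ} (hp : p ∈ Set.Icc (0 : ℝ) 1) : 0 ≤ binH p := by
  rw [binH_eq]
  exact div_nonneg (Real.binEntropy_nonneg hp.1 hp.2) (Real.log_nonneg one_le_two)

lemma binH_le_one (p : ℝ) : binH p ≤ 1 := by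
  rw [binH_eq]
  exact (div_le_one (Real.log_pos one_lt_two)).mpr Real.binEntropy_le_log_two

lemma binH_half : binH (1 / 2 : ℝ) = 1 := by
  have : (1 : ℝ) / (1 / 2) = 2 := by norm_num
  unfold binH
  rw [show (1 : ℝ) - 1/2 = 1/2 by norm_num, this]
  rw [Real.logb_self_eq_one (by norm_num : (1:ℝ) < 2)]
  norm_num

/-- For `t ≥ 1`, `log t ≤ (t - t⁻¹)/2`. -/
lemma log_le_half_sub_half_inv {t : ℝ} (ht : 1 ≤ t) :
    Real.log t ≤ (t - t⁻¹) / 2 := by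
  have key : MonotoneOn (fun s : ℝ => (s - s⁻¹) / 2 - Real.log s) (Set.Ici 1) := by
    apply monotoneOn_of_hasDerivWithinAt_nonneg (f' := fun s => (1 - -(s ^ 2)⁻¹) / 2 - s⁻¹)
      (convex_Ici 1)
    · intro s hs
      have hs0 : s ≠ 0 := by
        have : (1:ℝ) ≤ s := hs
        positivity
      exact (((continuousAt_id.sub (continuousAt_inv₀ hs0)).div_const 2).sub
        (Real.continuousAt_log hs0)).continuousWithinAt
    · intro s hs
      rw [interior_Ici] at hs
      have hs0 : s ≠ 0 := by
        have : (1:ℝ) < s := hs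
        positivity
      exact ((((hasDerivAt_id s).sub (hasDerivAt_inv hs0)).div_const 2).sub
        (Real.hasDerivAt_log hs0)).hasDerivWithinAt
    · intro s hs
      rw [interior_Ici] at hs
      have hs1 : (1:ℝ) < s := hs
      have hs0 : s ≠ 0 := by positivity
      have he : (1 - -(s ^ 2)⁻¹) / 2 - s⁻¹ = (s - 1) ^ 2 / (2 * s ^ 2) := by
        field_simp
        ring
      rw [he]
      positivity
  have h1 : (1:ℝ) ∈ Set.Ici (1:ℝ) := Set.self_mem_Ici
  have ht' : t ∈ Set.Ici (1:ℝ) := ht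
  have := key h1 ht' ht
  simp only [inv_one, Real.log_one] at this
  norm_num at this
  linarith

/-- For `0 < t ≤ 1`, `log t ≤ (t-1) - (t-1)²/2`. -/
lemma log_le_sub_one_sub_sq {t : ℝ} (h0 : 0 < t) (h1 : t ≤ 1) :
    Real.log t ≤ (t - 1) - (t - 1) ^ 2 / 2 := by
  have key : MonotoneOn (fun s : ℝ => Real.log s - (s - 1) + (s - 1) ^ 2 / 2)
      (Set.Ioc 0 1) := by
    apply monotoneOn_of_hasDerivWithinAt_nonneg
      (f' := fun s => s⁻¹ - 1 + (2 * (s - 1) ^ 1 * 1) / 2) (convex_Ioc 0 1)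
    · intro s hs
      have hs0 : s ≠ 0 := ne_of_gt hs.1
      exact (((Real.continuousAt_log hs0).sub (continuousAt_id.sub continuousAt_const)).add
        (((continuousAt_id.sub continuousAt_const).pow 2).div_const 2)).continuousWithinAt
    · intro s hs
      rw [interior_Ioc] at hs
      have hs0 : s ≠ 0 := ne_of_gt hs.1
      exact (((Real.hasDerivAt_log hs0).sub ((hasDerivAt_id s).sub_const 1)).add
        ((((hasDerivAt_id s).sub_const 1).pow 2).div_const 2)).hasDerivWithinAt
    · intro s hs
      rw [interior_Ioc] at hs
      have hs0 : (0:ℝ) < s := hs.1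
      have he : s⁻¹ - 1 + (2 * (s - 1) ^ 1 * 1) / 2 = (s - 1) ^ 2 / s := by
        field_simp
        ring
      rw [he]
      positivity
  have hmem : t ∈ Set.Ioc (0:ℝ) 1 := ⟨h0, h1⟩
  have h1mem : (1:ℝ) ∈ Set.Ioc (0:ℝ) 1 := ⟨one_pos, le_refl 1⟩
  have := key hmem h1mem h1
  simp only [Real.log_one] at this
  norm_num at this
  nlinarith [this]

/-- Pinsker-type bound at `q = 1/5` for `p ∈ (0, 1/2]`. -/
lemma claimA {p : ℝ} (hp0 : 0 < p) (hp1 : p ≤ 1 / 2) :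
    p * Real.log (1 / (5 * p)) + (1 - p) * Real.log ((4 / 5) / (1 - p))
      ≤ -(p - 1 / 5) ^ 2 / 2 := by
  have h1p : (0:ℝ) < 1 - p := by linarith
  have h2 : (1 - p) * Real.log ((4 / 5) / (1 - p)) ≤ p - 1 / 5 := by
    have hpos : (0:ℝ) < (4 / 5) / (1 - p) := by positivity
    have hlog := Real.log_le_sub_one_of_pos hpos
    calc (1 - p) * Real.log ((4 / 5) / (1 - p))
        ≤ (1 - p) * ((4 / 5) / (1 - p) - 1) := by
          exact mul_le_mul_of_nonneg_left hlog h1p.le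
      _ = p - 1 / 5 := by field_simp; ring
  rcases le_or_gt p (1 / 5) with hle | hgt
  · have ht : (1:ℝ) ≤ 1 / (5 * p) := by
      rw [le_div_iff₀ (by positivity)]
      linarith
    have hlog := log_le_half_sub_half_inv ht
    have hinv : ((1:ℝ) / (5 * p))⁻¹ = 5 * p := by
      rw [one_div, inv_inv]
    rw [hinv] at hlog
    have h1 : p * Real.log (1 / (5 * p)) ≤ (1 / 5 - 5 * p ^ 2) / 2 := by
      calc p * Real.log (1 / (5 * p)) ≤ p * ((1 / (5 * p) - 5 * p) / 2) :=
            mul_le_mul_of_nonneg_left hlog hp0.le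
        _ = (1 / 5 - 5 * p ^ 2) / 2 := by field_simp
    nlinarith [sq_nonneg (p - 1 / 5)]
  · have ht0 : (0:ℝ) < 1 / (5 * p) := by positivity
    have ht1 : (1:ℝ) / (5 * p) ≤ 1 := by
      rw [div_le_one (by positivity)]
      linarith
    have hlog := log_le_sub_one_sub_sq ht0 ht1
    have h1 : p * Real.log (1 / (5 * p))
        ≤ (1 / 5 - p) - (p - 1 / 5) ^ 2 / (2 * p) := by
      calc p * Real.log (1 / (5 * p))
          ≤ p * ((1 / (5 * p) - 1) - (1 / (5 * p) - 1) ^ 2 / 2) :=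
            mul_le_mul_of_nonneg_left hlog hp0.le
        _ = (1 / 5 - p) - (p - 1 / 5) ^ 2 / (2 * p) := by field_simp; ring
    have h3 : (p - 1 / 5) ^ 2 ≤ (p - 1 / 5) ^ 2 / (2 * p) := by
      rw [le_div_iff₀ (by positivity)]
      nlinarith [sq_nonneg (p - 1 / 5)]
    nlinarith [sq_nonneg (p - 1 / 5)]
  
/-- Entropy upper bound with quadratic gain around `1/5`. -/
lemma binEntropy_le_quad {p : ℝ} (hp0 : 0 < p) (hp1 : p ≤ 1 / 2) :
    Real.binEntropy p ≤ Real.log (5 / 4) + 2 * p * Real.log 2 - (p - 1 / 5) ^ 2 / 2 := by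
  have h1p : (0:ℝ) < 1 - p := by linarith
  have e1 : Real.log p⁻¹ = Real.log (1 / (5 * p)) + Real.log 5 := by
    rw [← Real.log_mul (by positivity) (by norm_num)]
    congr 1
    field_simp
    try ring
  have e2 : Real.log (1 - p)⁻¹ = Real.log ((4 / 5) / (1 - p)) + Real.log (5 / 4) := by
    rw [← Real.log_mul (by positivity) (by norm_num)]
    congr 1
    field_simp
    try ring
  have e3 : Real.log 5 = Real.log (5 / 4) + 2 * Real.log 2 := by
    rw [show (5:ℝ) = (5 / 4) * 2 ^ 2 by norm_num,
      Real.log_mul (by norm_num) (by norm_num), Real.log_pow]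
    push_cast
    ring
  have hA := claimA hp0 hp1
  have expand : p * (Real.log (1 / (5 * p)) + Real.log 5)
      + (1 - p) * (Real.log ((4 / 5) / (1 - p)) + Real.log (5 / 4))
      = (p * Real.log (1 / (5 * p)) + (1 - p) * Real.log ((4 / 5) / (1 - p)))
        + Real.log (5 / 4) + 2 * p * Real.log 2 := by
    rw [e3]
    ring
  unfold Real.binEntropy
  rw [e1, e2]
  linarith [hA, expand]

/-- The main real inequality: for `x ∈ [0,1]`,
`x - binH(x/2) ≥ -log₂(5/4) + (x - 2/5)²/(8 log 2)`. -/
lemma key_ineq {x : ℝ} (h0 : 0 ≤ x) (h1 : x ≤ 1) :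
    -(Real.logb 2 (5 / 4)) + (1 / (8 * Real.log 2)) * (x - 2 / 5) ^ 2
      ≤ x - binH (x / 2) := by
  have hlog2 : (0:ℝ) < Real.log 2 := Real.log_pos one_lt_two
  have hlog54 : (1:ℝ) / 5 ≤ Real.log (5 / 4) := by
    have := Real.one_sub_inv_le_log_of_pos (show (0:ℝ) < 5 / 4 by norm_num)
    norm_num at this
    linarith
  have main : -(Real.log (5 / 4)) + (1 / 8) * (x - 2 / 5) ^ 2
      ≤ x * Real.log 2 - Real.binEntropy (x / 2) := by
    rcases eq_or_lt_of_le h0 with heq | hx0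
    · rw [← heq]
      norm_num
      linarith
    · have hb := binEntropy_le_quad (p := x / 2) (by linarith) (by linarith)
      have hq : (x / 2 - 1 / 5) ^ 2 / 2 = (x - 2 / 5) ^ 2 / 8 := by ring
      rw [hq] at hb
      linarith
  have e : x - binH (x / 2) = (x * Real.log 2 - Real.binEntropy (x / 2)) / Real.log 2 := by
    rw [binH_eq]
    field_simp
  have e2 : -(Real.logb 2 (5 / 4)) + (1 / (8 * Real.log 2)) * (x - 2 / 5) ^ 2
      = (-(Real.log (5 / 4)) + (1 / 8) * (x - 2 / 5) ^ 2) / Real.log 2 := by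
    rw [Real.logb]
    field_simp
  rw [e, e2]
  exact (div_le_div_iff_of_pos_right hlog2).mpr main

/-- There is an absolute `C₀ > 0` such that for all `β ∈ [1,2)` and `(c,b) ∈ C(β)`,
writing `x = ∑ cᵢ`, we have `sup_{α ∈ A(c,b)} P(c,α) ≥ −log₂(5/4) + C₀(x − 2/5)²`. -/
theorem supP_ge_quadratic :
    ∃ C₀ > (0 : ℝ), ∀ β ∈ Set.Ico (1 : ℝ) 2, ∀ c : ℕ → ℝ, ∀ b : ℕ, memC β c b →
      -(Real.logb 2 (5 / 4)) + C₀ * ((∑' i : ℕ, c i) - 2 / 5) ^ 2 ≤ supP β b c := by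
  have hlog2 : (0:ℝ) < Real.log 2 := Real.log_pos one_lt_two
  refine ⟨1 / (8 * Real.log 2), by positivity, ?_⟩
  rintro β ⟨hβ1, hβ2⟩ c b ⟨hc01, hcsum, hcpart⟩
  have hβ0 : (0:ℝ) < β := by linarith
  have hβne : β ≠ 0 := ne_of_gt hβ0
  have hcnn : ∀ i, 0 ≤ c i := fun i => (hc01 i).1
  have hsumc : Summable c := summable_of_sum_range_le hcnn hcpart
  set x := ∑' i : ℕ, c i with hx
  have hx0 : 0 ≤ x := tsum_nonneg hcnn
  have hx1 : x ≤ 1 := Real.tsum_le_of_sum_range_le hcnn hcpart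
  -- the constant-1/2 sequence is admissible
  have hmem : memA β b c (fun _ => 1 / 2) := by
    refine ⟨fun i => ⟨by norm_num, by norm_num⟩, ?_⟩
    calc (∑' i : ℕ, (fun _ => (1:ℝ) / 2) i * c i / 2 ^ i)
        = ∑' i : ℕ, (1 / 2 : ℝ) * (c i / 2 ^ i) := tsum_congr fun i => by ring
      _ = (1 / 2 : ℝ) * ∑' i : ℕ, c i / 2 ^ i := tsum_mul_left
      _ = 1 / (β * 2 ^ (b + 1)) := by
          rw [hcsum, pow_succ]
          field_simp
  -- value of P at the constant-1/2 sequence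
  have hval : Pfun c (fun _ => 1 / 2) = x - binH (x / 2) := by
    unfold Pfun
    have e1 : (∑' i : ℕ, binH ((fun _ => (1:ℝ) / 2) i) * c i) = x := by
      simp only [binH_half, one_mul]
      exact hx.symm
    have e2 : (∑' i : ℕ, (fun _ => (1:ℝ) / 2) i * c i) = x / 2 := by
      simp only
      rw [tsum_mul_left]
      ring
    rw [e1, e2]
  -- the defining set of supP is bounded above by 1
  have hbdd : BddAbove {y | ∃ α, memA β b c α ∧ y = Pfun c α} := by
    refine ⟨1, ?_⟩
    rintro y ⟨α, ⟨hα01, _⟩, rfl⟩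
    unfold Pfun
    have hs1 : Summable (fun i => binH (α i) * c i) :=
      Summable.of_nonneg_of_le
        (fun i => mul_nonneg (binH_nonneg (hα01 i)) (hcnn i))
        (fun i => mul_le_of_le_one_left (hcnn i) (binH_le_one _)) hsumc
    have ht1 : (∑' i : ℕ, binH (α i) * c i) ≤ 1 :=
      le_trans (Summable.tsum_le_tsum
        (fun i => mul_le_of_le_one_left (hcnn i) (binH_le_one _)) hs1 hsumc) hx1
    have hs2 : Summable (fun i => α i * c i) :=
      Summable.of_nonneg_of_le
        (fun i => mul_nonneg (hα01 i).1 (hcnn i))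
        (fun i => mul_le_of_le_one_left (hcnn i) (hα01 i).2) hsumc
    have ht2a : 0 ≤ ∑' i : ℕ, α i * c i :=
      tsum_nonneg fun i => mul_nonneg (hα01 i).1 (hcnn i)
    have ht2b : (∑' i : ℕ, α i * c i) ≤ 1 :=
      le_trans (Summable.tsum_le_tsum
        (fun i => mul_le_of_le_one_left (hcnn i) (hα01 i).2) hs2 hsumc) hx1
    have hnn := binH_nonneg ⟨ht2a, ht2b⟩
    linarith
  have hle : Pfun c (fun _ => 1 / 2) ≤ supP β b c :=
    le_csSup hbdd ⟨_, hmem, rfl⟩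
  rw [hval] at hle
  have hkey := key_ineq hx0 hx1
  linarith
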